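/- Given nonnegative weights w_i with Σ_i w_i > 0, define the weighted mean E_w[X] = (Σ_i w_i X_i)/(Σ_i w_i) and weighted variance V_w[X] = E_w[(X − E_w[X])²]. Then for Ỹ_i = (1/N₁)Y_i(1) + (1/N₀)Y_i(0), the identity V_w[Ỹ] = (N/(N₁N₀))·[(1/N₁)V_w[Y(1)] + (1/N₀)V_w[Y(0)] − (1/N)V_w[τ]] holds, where τ_i = Y_i(1) − Y_i(0) and N = N₁ + N₀. -/

import Mathlib

open Finset

lemma var_formula {n : ℕ} (w X : Fin n → ℝ) (hS : (∑ i, w i) ≠ 0) :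
    (∑ i, w i * (X i - (∑ i, w i * X i) / (∑ i, w i)) ^ 2) / (∑ i, w i)
      = (∑ i, w i * X i ^ 2) / (∑ i, w i) - ((∑ i, w i * X i) / (∑ i, w i)) ^ 2 := by
  set S := ∑ i, w i with hSdef
  set T := ∑ i, w i * X i with hTdef
  have expand : (∑ i, w i * (X i - T / S) ^ 2)
      = (∑ i, w i * X i ^ 2) - 2 * (T / S) * T + (T / S) ^ 2 * S := by
    have h : ∀ i, w i * (X i - T / S) ^ 2
        = w i * X i ^ 2 - (2 * (T / S)) * (w i * X i) + (T / S) ^ 2 * w i := fun i => by ring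
    simp_rw [h, Finset.sum_add_distrib, Finset.sum_sub_distrib, ← Finset.mul_sum]
    rfl
  rw [expand]
  field_simp
  ring

/-- Weighted-variance decomposition of Ỹ_i = Y_i(1)/N₁ + Y_i(0)/N₀. -/
theorem weighted_variance_decomposition (N1 N0 : ℕ) (hN1 : 0 < N1) (hN0 : 0 < N0)
    (Y0 Y1 w : Fin (N1 + N0) → ℝ) (hw : ∀ i, 0 ≤ w i) (hwsum : 0 < ∑ i, w i) :
    let Ew : (Fin (N1 + N0) → ℝ) → ℝ := fun X => (∑ i, w i * X i) / (∑ i, w i)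
    let Vw : (Fin (N1 + N0) → ℝ) → ℝ := fun X => Ew (fun i => (X i - Ew X) ^ 2)
    Vw (fun i => (1 / (N1 : ℝ)) * Y1 i + (1 / (N0 : ℝ)) * Y0 i)
      = (((N1 + N0 : ℕ) : ℝ) / ((N1 : ℝ) * (N0 : ℝ)))
        * ((1 / (N1 : ℝ)) * Vw Y1 + (1 / (N0 : ℝ)) * Vw Y0
           - (1 / ((N1 + N0 : ℕ) : ℝ)) * Vw (fun i => Y1 i - Y0 i)) := by
  intro Ew Vw
  have hS : (∑ i, w i) ≠ 0 := ne_of_gt hwsum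
  have key : ∀ X : Fin (N1 + N0) → ℝ,
      Vw X = (∑ i, w i * X i ^ 2) / (∑ i, w i) - ((∑ i, w i * X i) / (∑ i, w i)) ^ 2 := by
    intro X
    simpa [Vw, Ew] using var_formula w X hS
  rw [key, key, key, key]
  have hn1 : (N1 : ℝ) ≠ 0 := Nat.cast_ne_zero.mpr hN1.ne'
  have hn0 : (N0 : ℝ) ≠ 0 := Nat.cast_ne_zero.mpr hN0.ne'
  have hn : ((N1 + N0 : ℕ) : ℝ) ≠ 0 := Nat.cast_ne_zero.mpr (by omega)
  set S := ∑ i, w i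
  set A := ∑ i, w i * Y1 i with hA
  set B := ∑ i, w i * Y0 i with hB
  set A2 := ∑ i, w i * Y1 i ^ 2 with hA2
  set B2 := ∑ i, w i * Y0 i ^ 2 with hB2
  set C := ∑ i, w i * (Y1 i * Y0 i) with hC
  have e1 : (∑ i, w i * ((1 / (N1 : ℝ)) * Y1 i + (1 / (N0 : ℝ)) * Y0 i))
      = (1 / (N1 : ℝ)) * A + (1 / (N0 : ℝ)) * B := by
    rw [hA, hB, Finset.mul_sum, Finset.mul_sum, ← Finset.sum_add_distrib]
    exact Finset.sum_congr rfl fun i _ => by ring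
  have e2 : (∑ i, w i * ((1 / (N1 : ℝ)) * Y1 i + (1 / (N0 : ℝ)) * Y0 i) ^ 2)
      = (1 / (N1 : ℝ)) ^ 2 * A2 + 2 * (1 / (N1 : ℝ)) * (1 / (N0 : ℝ)) * C
        + (1 / (N0 : ℝ)) ^ 2 * B2 := by
    rw [hA2, hB2, hC, Finset.mul_sum, Finset.mul_sum, Finset.mul_sum,
      ← Finset.sum_add_distrib, ← Finset.sum_add_distrib]
    exact Finset.sum_congr rfl fun i _ => by ring
  have e3 : (∑ i, w i * (Y1 i - Y0 i)) = A - B := by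
    rw [hA, hB, ← Finset.sum_sub_distrib]
    exact Finset.sum_congr rfl fun i _ => by ring
  have e4 : (∑ i, w i * (Y1 i - Y0 i) ^ 2) = A2 - 2 * C + B2 := by
    rw [hA2, hB2, hC, Finset.mul_sum, ← Finset.sum_sub_distrib, ← Finset.sum_add_distrib]
    exact Finset.sum_congr rfl fun i _ => by ring
  rw [e1, e2, e3, e4]
  field_simp
  push_cast
  ring
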